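/- For the skew-symmetric matrix M(v,w,x,y,z) defining the Klein cubic (as in the previous item), the 15 quadratic Pfaffians c_{ij} = (-1)^{i+j+1}(a_{pq}a_{rs} - a_{pr}a_{qs} + a_{ps}a_{qr}) (where p<q<r<s and (pqrsij) is a permutation of (123456)) are linearly independent as quadratic forms in v,w,x,y,z. -/

import Mathlib

open Matrix

/-- The quadratic Pfaffian `c_{ij}` of a 6×6 skew-symmetric matrix `M`, for `i < j`:
`c_{ij} = (-1)^(i+j+1) (a_{pq} a_{rs} - a_{pr} a_{qs} + a_{ps} a_{qr})`,
where `p < q < r < s` is the increasing enumeration of the complement of `{i,j}`. -/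
noncomputable def qpf (M : Matrix (Fin 6) (Fin 6) ℂ) (i j : Fin 6) : ℂ :=
  if hij : i < j then
    have hne : i ≠ j := ne_of_lt hij
    have h2 : ({i, j} : Finset (Fin 6)).card = 2 := by
      rw [Finset.card_insert_of_notMem (by simpa using hne), Finset.card_singleton]
    have hcard : ({i, j}ᶜ : Finset (Fin 6)).card = 4 := by
      rw [Finset.card_compl, h2]; rfl
    let e := ({i, j}ᶜ : Finset (Fin 6)).orderEmbOfFin hcard
    (-1 : ℂ) ^ (i.val + j.val + 1) *
      (M (e 0) (e 1) * M (e 2) (e 3) - M (e 0) (e 2) * M (e 1) (e 3) +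
        M (e 0) (e 3) * M (e 1) (e 2))
  else 0

/-- The quadratic Pfaffian map `Pf₂`, sending a skew-symmetric 6×6 matrix `M`
(identified with the 2-form `∑ a_{ij} εᵢ∧εⱼ`) to the skew-symmetric matrix of its
15 quadratic Pfaffians (identified with the bivector `(1/(2!·4!)) (M∧M) ⌟ e₁∧…∧e₆`). -/
noncomputable def pf2 (M : Matrix (Fin 6) (Fin 6) ℂ) : Matrix (Fin 6) (Fin 6) ℂ :=
  Matrix.of fun i j =>
    if i < j then qpf M i j else if j < i then -qpf M j i else 0

/-- Adler's skew-symmetric matrix whose Pfaffian is the Klein cubic. -/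
def kleinM (v w x y z : ℂ) : Matrix (Fin 6) (Fin 6) ℂ :=
  !![0, v, w, x, y, z;
     -v, 0, 0, z, -x, 0;
     -w, 0, 0, 0, v, -y;
     -x, -z, 0, 0, 0, w;
     -y, x, -v, 0, 0, 0;
     -z, 0, y, -w, 0, 0]

lemma qpf_01 (v w x y z : ℂ) : qpf (kleinM v w x y z) 0 1 = -(v*w) := by
  rw [qpf]
  simp only [show ((0:Fin 6) < 1) from by decide, dif_pos]
  have he : ∀ (h : ({(0:Fin 6), 1}ᶜ : Finset (Fin 6)).card = 4) (k : Fin 4),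
      (({(0:Fin 6), 1}ᶜ : Finset (Fin 6)).orderEmbOfFin h) k = ![2,3,4,5] k := by
    intro h k
    rw [← Finset.orderEmbOfFin_unique h (f := ![2,3,4,5]) (by decide)
      (by intro a b hab; fin_cases a <;> fin_cases b <;> simp_all)]
  simp only [he, show (![2,3,4,5] : Fin 4 → Fin 6) 0 = 2 from rfl,
    show (![2,3,4,5] : Fin 4 → Fin 6) 1 = 3 from rfl,
    show (![2,3,4,5] : Fin 4 → Fin 6) 2 = 4 from rfl,
    show (![2,3,4,5] : Fin 4 → Fin 6) 3 = 5 from rfl,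
    show kleinM v w x y z 2 3 = (0 : ℂ) from rfl,
    show kleinM v w x y z 4 5 = (0 : ℂ) from rfl,
    show kleinM v w x y z 2 4 = (v : ℂ) from rfl,
    show kleinM v w x y z 3 5 = (w : ℂ) from rfl,
    show kleinM v w x y z 2 5 = (-y : ℂ) from rfl,
    show kleinM v w x y z 3 4 = (0 : ℂ) from rfl,
    show ((0:Fin 6) : ℕ) = 0 from rfl, show ((1:Fin 6) : ℕ) = 1 from rfl]
  ring

lemma qpf_02 (v w x y z : ℂ) : qpf (kleinM v w x y z) 0 2 = -(w*x) := by
  rw [qpf]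
  simp only [show ((0:Fin 6) < 2) from by decide, dif_pos]
  have he : ∀ (h : ({(0:Fin 6), 2}ᶜ : Finset (Fin 6)).card = 4) (k : Fin 4),
      (({(0:Fin 6), 2}ᶜ : Finset (Fin 6)).orderEmbOfFin h) k = ![1,3,4,5] k := by
    intro h k
    rw [← Finset.orderEmbOfFin_unique h (f := ![1,3,4,5]) (by decide)
      (by intro a b hab; fin_cases a <;> fin_cases b <;> simp_all)]
  simp only [he, show (![1,3,4,5] : Fin 4 → Fin 6) 0 = 1 from rfl,
    show (![1,3,4,5] : Fin 4 → Fin 6) 1 = 3 from rfl,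
    show (![1,3,4,5] : Fin 4 → Fin 6) 2 = 4 from rfl,
    show (![1,3,4,5] : Fin 4 → Fin 6) 3 = 5 from rfl,
    show kleinM v w x y z 1 3 = (z : ℂ) from rfl,
    show kleinM v w x y z 4 5 = (0 : ℂ) from rfl,
    show kleinM v w x y z 1 4 = (-x : ℂ) from rfl,
    show kleinM v w x y z 3 5 = (w : ℂ) from rfl,
    show kleinM v w x y z 1 5 = (0 : ℂ) from rfl,
    show kleinM v w x y z 3 4 = (0 : ℂ) from rfl,
    show ((0:Fin 6) : ℕ) = 0 from rfl, show ((2:Fin 6) : ℕ) = 2 from rfl]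
  ring

lemma qpf_03 (v w x y z : ℂ) : qpf (kleinM v w x y z) 0 3 = -(x*y) := by
  rw [qpf]
  simp only [show ((0:Fin 6) < 3) from by decide, dif_pos]
  have he : ∀ (h : ({(0:Fin 6), 3}ᶜ : Finset (Fin 6)).card = 4) (k : Fin 4),
      (({(0:Fin 6), 3}ᶜ : Finset (Fin 6)).orderEmbOfFin h) k = ![1,2,4,5] k := by
    intro h k
    rw [← Finset.orderEmbOfFin_unique h (f := ![1,2,4,5]) (by decide)
      (by intro a b hab; fin_cases a <;> fin_cases b <;> simp_all)]
  simp only [he, show (![1,2,4,5] : Fin 4 → Fin 6) 0 = 1 from rfl,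
    show (![1,2,4,5] : Fin 4 → Fin 6) 1 = 2 from rfl,
    show (![1,2,4,5] : Fin 4 → Fin 6) 2 = 4 from rfl,
    show (![1,2,4,5] : Fin 4 → Fin 6) 3 = 5 from rfl,
    show kleinM v w x y z 1 2 = (0 : ℂ) from rfl,
    show kleinM v w x y z 4 5 = (0 : ℂ) from rfl,
    show kleinM v w x y z 1 4 = (-x : ℂ) from rfl,
    show kleinM v w x y z 2 5 = (-y : ℂ) from rfl,
    show kleinM v w x y z 1 5 = (0 : ℂ) from rfl,
    show kleinM v w x y z 2 4 = (v : ℂ) from rfl,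
    show ((0:Fin 6) : ℕ) = 0 from rfl, show ((3:Fin 6) : ℕ) = 3 from rfl]
  ring

lemma qpf_04 (v w x y z : ℂ) : qpf (kleinM v w x y z) 0 4 = -(y*z) := by
  rw [qpf]
  simp only [show ((0:Fin 6) < 4) from by decide, dif_pos]
  have he : ∀ (h : ({(0:Fin 6), 4}ᶜ : Finset (Fin 6)).card = 4) (k : Fin 4),
      (({(0:Fin 6), 4}ᶜ : Finset (Fin 6)).orderEmbOfFin h) k = ![1,2,3,5] k := by
    intro h k
    rw [← Finset.orderEmbOfFin_unique h (f := ![1,2,3,5]) (by decide)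
      (by intro a b hab; fin_cases a <;> fin_cases b <;> simp_all)]
  simp only [he, show (![1,2,3,5] : Fin 4 → Fin 6) 0 = 1 from rfl,
    show (![1,2,3,5] : Fin 4 → Fin 6) 1 = 2 from rfl,
    show (![1,2,3,5] : Fin 4 → Fin 6) 2 = 3 from rfl,
    show (![1,2,3,5] : Fin 4 → Fin 6) 3 = 5 from rfl,
    show kleinM v w x y z 1 2 = (0 : ℂ) from rfl,
    show kleinM v w x y z 3 5 = (w : ℂ) from rfl,
    show kleinM v w x y z 1 3 = (z : ℂ) from rfl,
    show kleinM v w x y z 2 5 = (-y : ℂ) from rfl,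
    show kleinM v w x y z 1 5 = (0 : ℂ) from rfl,
    show kleinM v w x y z 2 3 = (0 : ℂ) from rfl,
    show ((0:Fin 6) : ℕ) = 0 from rfl, show ((4:Fin 6) : ℕ) = 4 from rfl]
  ring

lemma qpf_05 (v w x y z : ℂ) : qpf (kleinM v w x y z) 0 5 = -(v*z) := by
  rw [qpf]
  simp only [show ((0:Fin 6) < 5) from by decide, dif_pos]
  have he : ∀ (h : ({(0:Fin 6), 5}ᶜ : Finset (Fin 6)).card = 4) (k : Fin 4),
      (({(0:Fin 6), 5}ᶜ : Finset (Fin 6)).orderEmbOfFin h) k = ![1,2,3,4] k := by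
    intro h k
    rw [← Finset.orderEmbOfFin_unique h (f := ![1,2,3,4]) (by decide)
      (by intro a b hab; fin_cases a <;> fin_cases b <;> simp_all)]
  simp only [he, show (![1,2,3,4] : Fin 4 → Fin 6) 0 = 1 from rfl,
    show (![1,2,3,4] : Fin 4 → Fin 6) 1 = 2 from rfl,
    show (![1,2,3,4] : Fin 4 → Fin 6) 2 = 3 from rfl,
    show (![1,2,3,4] : Fin 4 → Fin 6) 3 = 4 from rfl,
    show kleinM v w x y z 1 2 = (0 : ℂ) from rfl,
    show kleinM v w x y z 3 4 = (0 : ℂ) from rfl,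
    show kleinM v w x y z 1 3 = (z : ℂ) from rfl,
    show kleinM v w x y z 2 4 = (v : ℂ) from rfl,
    show kleinM v w x y z 1 4 = (-x : ℂ) from rfl,
    show kleinM v w x y z 2 3 = (0 : ℂ) from rfl,
    show ((0:Fin 6) : ℕ) = 0 from rfl, show ((5:Fin 6) : ℕ) = 5 from rfl]
  ring

lemma qpf_12 (v w x y z : ℂ) : qpf (kleinM v w x y z) 1 2 = -(w*y) := by
  rw [qpf]
  simp only [show ((1:Fin 6) < 2) from by decide, dif_pos]
  have he : ∀ (h : ({(1:Fin 6), 2}ᶜ : Finset (Fin 6)).card = 4) (k : Fin 4),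
      (({(1:Fin 6), 2}ᶜ : Finset (Fin 6)).orderEmbOfFin h) k = ![0,3,4,5] k := by
    intro h k
    rw [← Finset.orderEmbOfFin_unique h (f := ![0,3,4,5]) (by decide)
      (by intro a b hab; fin_cases a <;> fin_cases b <;> simp_all)]
  simp only [he, show (![0,3,4,5] : Fin 4 → Fin 6) 0 = 0 from rfl,
    show (![0,3,4,5] : Fin 4 → Fin 6) 1 = 3 from rfl,
    show (![0,3,4,5] : Fin 4 → Fin 6) 2 = 4 from rfl,
    show (![0,3,4,5] : Fin 4 → Fin 6) 3 = 5 from rfl,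
    show kleinM v w x y z 0 3 = (x : ℂ) from rfl,
    show kleinM v w x y z 4 5 = (0 : ℂ) from rfl,
    show kleinM v w x y z 0 4 = (y : ℂ) from rfl,
    show kleinM v w x y z 3 5 = (w : ℂ) from rfl,
    show kleinM v w x y z 0 5 = (z : ℂ) from rfl,
    show kleinM v w x y z 3 4 = (0 : ℂ) from rfl,
    show ((1:Fin 6) : ℕ) = 1 from rfl, show ((2:Fin 6) : ℕ) = 2 from rfl]
  ring

lemma qpf_13 (v w x y z : ℂ) : qpf (kleinM v w x y z) 1 3 = -(y*y+v*z) := by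
  rw [qpf]
  simp only [show ((1:Fin 6) < 3) from by decide, dif_pos]
  have he : ∀ (h : ({(1:Fin 6), 3}ᶜ : Finset (Fin 6)).card = 4) (k : Fin 4),
      (({(1:Fin 6), 3}ᶜ : Finset (Fin 6)).orderEmbOfFin h) k = ![0,2,4,5] k := by
    intro h k
    rw [← Finset.orderEmbOfFin_unique h (f := ![0,2,4,5]) (by decide)
      (by intro a b hab; fin_cases a <;> fin_cases b <;> simp_all)]
  simp only [he, show (![0,2,4,5] : Fin 4 → Fin 6) 0 = 0 from rfl,
    show (![0,2,4,5] : Fin 4 → Fin 6) 1 = 2 from rfl,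
    show (![0,2,4,5] : Fin 4 → Fin 6) 2 = 4 from rfl,
    show (![0,2,4,5] : Fin 4 → Fin 6) 3 = 5 from rfl,
    show kleinM v w x y z 0 2 = (w : ℂ) from rfl,
    show kleinM v w x y z 4 5 = (0 : ℂ) from rfl,
    show kleinM v w x y z 0 4 = (y : ℂ) from rfl,
    show kleinM v w x y z 2 5 = (-y : ℂ) from rfl,
    show kleinM v w x y z 0 5 = (z : ℂ) from rfl,
    show kleinM v w x y z 2 4 = (v : ℂ) from rfl,
    show ((1:Fin 6) : ℕ) = 1 from rfl, show ((3:Fin 6) : ℕ) = 3 from rfl]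
  ring

lemma qpf_14 (v w x y z : ℂ) : qpf (kleinM v w x y z) 1 4 = w*w+x*y := by
  rw [qpf]
  simp only [show ((1:Fin 6) < 4) from by decide, dif_pos]
  have he : ∀ (h : ({(1:Fin 6), 4}ᶜ : Finset (Fin 6)).card = 4) (k : Fin 4),
      (({(1:Fin 6), 4}ᶜ : Finset (Fin 6)).orderEmbOfFin h) k = ![0,2,3,5] k := by
    intro h k
    rw [← Finset.orderEmbOfFin_unique h (f := ![0,2,3,5]) (by decide)
      (by intro a b hab; fin_cases a <;> fin_cases b <;> simp_all)]
  simp only [he, show (![0,2,3,5] : Fin 4 → Fin 6) 0 = 0 from rfl,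
    show (![0,2,3,5] : Fin 4 → Fin 6) 1 = 2 from rfl,
    show (![0,2,3,5] : Fin 4 → Fin 6) 2 = 3 from rfl,
    show (![0,2,3,5] : Fin 4 → Fin 6) 3 = 5 from rfl,
    show kleinM v w x y z 0 2 = (w : ℂ) from rfl,
    show kleinM v w x y z 3 5 = (w : ℂ) from rfl,
    show kleinM v w x y z 0 3 = (x : ℂ) from rfl,
    show kleinM v w x y z 2 5 = (-y : ℂ) from rfl,
    show kleinM v w x y z 0 5 = (z : ℂ) from rfl,
    show kleinM v w x y z 2 3 = (0 : ℂ) from rfl,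
    show ((1:Fin 6) : ℕ) = 1 from rfl, show ((4:Fin 6) : ℕ) = 4 from rfl]
  ring

lemma qpf_15 (v w x y z : ℂ) : qpf (kleinM v w x y z) 1 5 = v*x := by
  rw [qpf]
  simp only [show ((1:Fin 6) < 5) from by decide, dif_pos]
  have he : ∀ (h : ({(1:Fin 6), 5}ᶜ : Finset (Fin 6)).card = 4) (k : Fin 4),
      (({(1:Fin 6), 5}ᶜ : Finset (Fin 6)).orderEmbOfFin h) k = ![0,2,3,4] k := by
    intro h k
    rw [← Finset.orderEmbOfFin_unique h (f := ![0,2,3,4]) (by decide)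
      (by intro a b hab; fin_cases a <;> fin_cases b <;> simp_all)]
  simp only [he, show (![0,2,3,4] : Fin 4 → Fin 6) 0 = 0 from rfl,
    show (![0,2,3,4] : Fin 4 → Fin 6) 1 = 2 from rfl,
    show (![0,2,3,4] : Fin 4 → Fin 6) 2 = 3 from rfl,
    show (![0,2,3,4] : Fin 4 → Fin 6) 3 = 4 from rfl,
    show kleinM v w x y z 0 2 = (w : ℂ) from rfl,
    show kleinM v w x y z 3 4 = (0 : ℂ) from rfl,
    show kleinM v w x y z 0 3 = (x : ℂ) from rfl,
    show kleinM v w x y z 2 4 = (v : ℂ) from rfl,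
    show kleinM v w x y z 0 4 = (y : ℂ) from rfl,
    show kleinM v w x y z 2 3 = (0 : ℂ) from rfl,
    show ((1:Fin 6) : ℕ) = 1 from rfl, show ((5:Fin 6) : ℕ) = 5 from rfl]
  ring

lemma qpf_23 (v w x y z : ℂ) : qpf (kleinM v w x y z) 2 3 = -(x*z) := by
  rw [qpf]
  simp only [show ((2:Fin 6) < 3) from by decide, dif_pos]
  have he : ∀ (h : ({(2:Fin 6), 3}ᶜ : Finset (Fin 6)).card = 4) (k : Fin 4),
      (({(2:Fin 6), 3}ᶜ : Finset (Fin 6)).orderEmbOfFin h) k = ![0,1,4,5] k := by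
    intro h k
    rw [← Finset.orderEmbOfFin_unique h (f := ![0,1,4,5]) (by decide)
      (by intro a b hab; fin_cases a <;> fin_cases b <;> simp_all)]
  simp only [he, show (![0,1,4,5] : Fin 4 → Fin 6) 0 = 0 from rfl,
    show (![0,1,4,5] : Fin 4 → Fin 6) 1 = 1 from rfl,
    show (![0,1,4,5] : Fin 4 → Fin 6) 2 = 4 from rfl,
    show (![0,1,4,5] : Fin 4 → Fin 6) 3 = 5 from rfl,
    show kleinM v w x y z 0 1 = (v : ℂ) from rfl,
    show kleinM v w x y z 4 5 = (0 : ℂ) from rfl,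
    show kleinM v w x y z 0 4 = (y : ℂ) from rfl,
    show kleinM v w x y z 1 5 = (0 : ℂ) from rfl,
    show kleinM v w x y z 0 5 = (z : ℂ) from rfl,
    show kleinM v w x y z 1 4 = (-x : ℂ) from rfl,
    show ((2:Fin 6) : ℕ) = 2 from rfl, show ((3:Fin 6) : ℕ) = 3 from rfl]
  ring

lemma qpf_24 (v w x y z : ℂ) : qpf (kleinM v w x y z) 2 4 = -(v*w+z*z) := by
  rw [qpf]
  simp only [show ((2:Fin 6) < 4) from by decide, dif_pos]
  have he : ∀ (h : ({(2:Fin 6), 4}ᶜ : Finset (Fin 6)).card = 4) (k : Fin 4),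
      (({(2:Fin 6), 4}ᶜ : Finset (Fin 6)).orderEmbOfFin h) k = ![0,1,3,5] k := by
    intro h k
    rw [← Finset.orderEmbOfFin_unique h (f := ![0,1,3,5]) (by decide)
      (by intro a b hab; fin_cases a <;> fin_cases b <;> simp_all)]
  simp only [he, show (![0,1,3,5] : Fin 4 → Fin 6) 0 = 0 from rfl,
    show (![0,1,3,5] : Fin 4 → Fin 6) 1 = 1 from rfl,
    show (![0,1,3,5] : Fin 4 → Fin 6) 2 = 3 from rfl,
    show (![0,1,3,5] : Fin 4 → Fin 6) 3 = 5 from rfl,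
    show kleinM v w x y z 0 1 = (v : ℂ) from rfl,
    show kleinM v w x y z 3 5 = (w : ℂ) from rfl,
    show kleinM v w x y z 0 3 = (x : ℂ) from rfl,
    show kleinM v w x y z 1 5 = (0 : ℂ) from rfl,
    show kleinM v w x y z 0 5 = (z : ℂ) from rfl,
    show kleinM v w x y z 1 3 = (z : ℂ) from rfl,
    show ((2:Fin 6) : ℕ) = 2 from rfl, show ((4:Fin 6) : ℕ) = 4 from rfl]
  ring

lemma qpf_25 (v w x y z : ℂ) : qpf (kleinM v w x y z) 2 5 = x*x+y*z := by
  rw [qpf]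
  simp only [show ((2:Fin 6) < 5) from by decide, dif_pos]
  have he : ∀ (h : ({(2:Fin 6), 5}ᶜ : Finset (Fin 6)).card = 4) (k : Fin 4),
      (({(2:Fin 6), 5}ᶜ : Finset (Fin 6)).orderEmbOfFin h) k = ![0,1,3,4] k := by
    intro h k
    rw [← Finset.orderEmbOfFin_unique h (f := ![0,1,3,4]) (by decide)
      (by intro a b hab; fin_cases a <;> fin_cases b <;> simp_all)]
  simp only [he, show (![0,1,3,4] : Fin 4 → Fin 6) 0 = 0 from rfl,
    show (![0,1,3,4] : Fin 4 → Fin 6) 1 = 1 from rfl,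
    show (![0,1,3,4] : Fin 4 → Fin 6) 2 = 3 from rfl,
    show (![0,1,3,4] : Fin 4 → Fin 6) 3 = 4 from rfl,
    show kleinM v w x y z 0 1 = (v : ℂ) from rfl,
    show kleinM v w x y z 3 4 = (0 : ℂ) from rfl,
    show kleinM v w x y z 0 3 = (x : ℂ) from rfl,
    show kleinM v w x y z 1 4 = (-x : ℂ) from rfl,
    show kleinM v w x y z 0 4 = (y : ℂ) from rfl,
    show kleinM v w x y z 1 3 = (z : ℂ) from rfl,
    show ((2:Fin 6) : ℕ) = 2 from rfl, show ((5:Fin 6) : ℕ) = 5 from rfl]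
  ring

lemma qpf_34 (v w x y z : ℂ) : qpf (kleinM v w x y z) 3 4 = -(v*y) := by
  rw [qpf]
  simp only [show ((3:Fin 6) < 4) from by decide, dif_pos]
  have he : ∀ (h : ({(3:Fin 6), 4}ᶜ : Finset (Fin 6)).card = 4) (k : Fin 4),
      (({(3:Fin 6), 4}ᶜ : Finset (Fin 6)).orderEmbOfFin h) k = ![0,1,2,5] k := by
    intro h k
    rw [← Finset.orderEmbOfFin_unique h (f := ![0,1,2,5]) (by decide)
      (by intro a b hab; fin_cases a <;> fin_cases b <;> simp_all)]
  simp only [he, show (![0,1,2,5] : Fin 4 → Fin 6) 0 = 0 from rfl,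
    show (![0,1,2,5] : Fin 4 → Fin 6) 1 = 1 from rfl,
    show (![0,1,2,5] : Fin 4 → Fin 6) 2 = 2 from rfl,
    show (![0,1,2,5] : Fin 4 → Fin 6) 3 = 5 from rfl,
    show kleinM v w x y z 0 1 = (v : ℂ) from rfl,
    show kleinM v w x y z 2 5 = (-y : ℂ) from rfl,
    show kleinM v w x y z 0 2 = (w : ℂ) from rfl,
    show kleinM v w x y z 1 5 = (0 : ℂ) from rfl,
    show kleinM v w x y z 0 5 = (z : ℂ) from rfl,
    show kleinM v w x y z 1 2 = (0 : ℂ) from rfl,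
    show ((3:Fin 6) : ℕ) = 3 from rfl, show ((4:Fin 6) : ℕ) = 4 from rfl]
  ring

lemma qpf_35 (v w x y z : ℂ) : qpf (kleinM v w x y z) 3 5 = -(v*v+w*x) := by
  rw [qpf]
  simp only [show ((3:Fin 6) < 5) from by decide, dif_pos]
  have he : ∀ (h : ({(3:Fin 6), 5}ᶜ : Finset (Fin 6)).card = 4) (k : Fin 4),
      (({(3:Fin 6), 5}ᶜ : Finset (Fin 6)).orderEmbOfFin h) k = ![0,1,2,4] k := by
    intro h k
    rw [← Finset.orderEmbOfFin_unique h (f := ![0,1,2,4]) (by decide)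
      (by intro a b hab; fin_cases a <;> fin_cases b <;> simp_all)]
  simp only [he, show (![0,1,2,4] : Fin 4 → Fin 6) 0 = 0 from rfl,
    show (![0,1,2,4] : Fin 4 → Fin 6) 1 = 1 from rfl,
    show (![0,1,2,4] : Fin 4 → Fin 6) 2 = 2 from rfl,
    show (![0,1,2,4] : Fin 4 → Fin 6) 3 = 4 from rfl,
    show kleinM v w x y z 0 1 = (v : ℂ) from rfl,
    show kleinM v w x y z 2 4 = (v : ℂ) from rfl,
    show kleinM v w x y z 0 2 = (w : ℂ) from rfl,
    show kleinM v w x y z 1 4 = (-x : ℂ) from rfl,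
    show kleinM v w x y z 0 4 = (y : ℂ) from rfl,
    show kleinM v w x y z 1 2 = (0 : ℂ) from rfl,
    show ((3:Fin 6) : ℕ) = 3 from rfl, show ((5:Fin 6) : ℕ) = 5 from rfl]
  ring

lemma qpf_45 (v w x y z : ℂ) : qpf (kleinM v w x y z) 4 5 = -(w*z) := by
  rw [qpf]
  simp only [show ((4:Fin 6) < 5) from by decide, dif_pos]
  have he : ∀ (h : ({(4:Fin 6), 5}ᶜ : Finset (Fin 6)).card = 4) (k : Fin 4),
      (({(4:Fin 6), 5}ᶜ : Finset (Fin 6)).orderEmbOfFin h) k = ![0,1,2,3] k := by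
    intro h k
    rw [← Finset.orderEmbOfFin_unique h (f := ![0,1,2,3]) (by decide)
      (by intro a b hab; fin_cases a <;> fin_cases b <;> simp_all)]
  simp only [he, show (![0,1,2,3] : Fin 4 → Fin 6) 0 = 0 from rfl,
    show (![0,1,2,3] : Fin 4 → Fin 6) 1 = 1 from rfl,
    show (![0,1,2,3] : Fin 4 → Fin 6) 2 = 2 from rfl,
    show (![0,1,2,3] : Fin 4 → Fin 6) 3 = 3 from rfl,
    show kleinM v w x y z 0 1 = (v : ℂ) from rfl,
    show kleinM v w x y z 2 3 = (0 : ℂ) from rfl,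
    show kleinM v w x y z 0 2 = (w : ℂ) from rfl,
    show kleinM v w x y z 1 3 = (z : ℂ) from rfl,
    show kleinM v w x y z 0 3 = (x : ℂ) from rfl,
    show kleinM v w x y z 1 2 = (0 : ℂ) from rfl,
    show ((4:Fin 6) : ℕ) = 4 from rfl, show ((5:Fin 6) : ℕ) = 5 from rfl]
  ring


def plS : Fin 15 → {p : Fin 6 × Fin 6 // p.1 < p.2} :=
  ![⟨(0,1), by decide⟩, ⟨(0,2), by decide⟩, ⟨(0,3), by decide⟩, ⟨(0,4), by decide⟩, ⟨(0,5), by decide⟩, ⟨(1,2), by decide⟩, ⟨(1,3), by decide⟩, ⟨(1,4), by decide⟩, ⟨(1,5), by decide⟩, ⟨(2,3), by decide⟩, ⟨(2,4), by decide⟩, ⟨(2,5), by decide⟩, ⟨(3,4), by decide⟩, ⟨(3,5), by decide⟩, ⟨(4,5), by decide⟩]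

lemma plS_bij : Function.Bijective plS := by decide

lemma sum_expand (f : {p : Fin 6 × Fin 6 // p.1 < p.2} → ℂ) :
    ∑ p, f p = ∑ k : Fin 15, f (plS k) :=
  (plS_bij.sum_comp f).symm


/- STATEMENT 10: The 15 quadratic Pfaffians c_{ij} (i < j) of the Klein matrix
   M(v,w,x,y,z) are linearly independent as quadratic forms (functions) in
   the five variables v,w,x,y,z. -/
theorem klein_quadratic_pfaffians_linearly_independent :
    LinearIndependent ℂ
      (fun p : {p : Fin 6 × Fin 6 // p.1 < p.2} =>
        (fun a : Fin 5 → ℂ =>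
          qpf (kleinM (a 0) (a 1) (a 2) (a 3) (a 4)) p.1.1 p.1.2)) := by
  rw [Fintype.linearIndependent_iff]
  intro g hg
  have key : ∀ V W X Y Z : ℂ, g ⟨(0,1), by decide⟩ * (-(V*W)) + g ⟨(0,2), by decide⟩ * (-(W*X)) + g ⟨(0,3), by decide⟩ * (-(X*Y)) + g ⟨(0,4), by decide⟩ * (-(Y*Z)) + g ⟨(0,5), by decide⟩ * (-(V*Z)) + g ⟨(1,2), by decide⟩ * (-(W*Y)) + g ⟨(1,3), by decide⟩ * (-(Y*Y+V*Z)) + g ⟨(1,4), by decide⟩ * (W*W+X*Y) + g ⟨(1,5), by decide⟩ * (V*X) + g ⟨(2,3), by decide⟩ * (-(X*Z)) + g ⟨(2,4), by decide⟩ * (-(V*W+Z*Z)) + g ⟨(2,5), by decide⟩ * (X*X+Y*Z) + g ⟨(3,4), by decide⟩ * (-(V*Y)) + g ⟨(3,5), by decide⟩ * (-(V*V+W*X)) + g ⟨(4,5), by decide⟩ * (-(W*Z)) = 0 := by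
    intro V W X Y Z
    have h0 := congrFun hg ![V,W,X,Y,Z]
    simp only [Finset.sum_apply, Pi.smul_apply, smul_eq_mul, Pi.zero_apply] at h0
    have h1 : ∑ p : {p : Fin 6 × Fin 6 // p.1 < p.2}, g p * qpf (kleinM V W X Y Z) p.1.1 p.1.2 = 0 := h0
    rw [sum_expand] at h1
    simp only [Fin.sum_univ_succ, Fin.sum_univ_zero, add_zero, plS, Matrix.cons_val_zero, Matrix.cons_val_succ, qpf_01, qpf_02, qpf_03, qpf_04, qpf_05, qpf_12, qpf_13, qpf_14, qpf_15, qpf_23, qpf_24, qpf_25, qpf_34, qpf_35, qpf_45] at h1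
    linear_combination h1
  have e1 := key 1 0 0 0 0
  have e2 := key 0 1 0 0 0
  have e3 := key 0 0 1 0 0
  have e4 := key 0 0 0 1 0
  have e5 := key 0 0 0 0 1
  have e6 := key 1 1 0 0 0
  have e7 := key 0 1 1 0 0
  have e8 := key 0 0 1 1 0
  have e9 := key 0 0 0 1 1
  have e10 := key 1 0 0 0 1
  have e11 := key 0 1 0 1 0
  have e12 := key 1 0 1 0 0
  have e13 := key 0 0 1 0 1
  have e14 := key 1 0 0 1 0
  have e15 := key 0 1 0 0 1
  intro p
  obtain ⟨k, rfl⟩ := plS_bij.2 p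
  fin_cases k
  · show g ⟨(0,1), by decide⟩ = 0; linear_combination -e6 + e5 + e2 + e1
  · show g ⟨(0,2), by decide⟩ = 0; linear_combination -e7 + e2 + e3 + e1
  · show g ⟨(0,3), by decide⟩ = 0; linear_combination -e8 + e4 + e2 + e3
  · show g ⟨(0,4), by decide⟩ = 0; linear_combination -e9 + e4 + e5 + e3
  · show g ⟨(0,5), by decide⟩ = 0; linear_combination -e10 + e4 + e5 + e1
  · show g ⟨(1,2), by decide⟩ = 0; linear_combination -e11 + e4 + e2
  · show g ⟨(1,3), by decide⟩ = 0; linear_combination -e4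
  · show g ⟨(1,4), by decide⟩ = 0; linear_combination e2
  · show g ⟨(1,5), by decide⟩ = 0; linear_combination e12 - e3 - e1
  · show g ⟨(2,3), by decide⟩ = 0; linear_combination -e13 + e5 + e3
  · show g ⟨(2,4), by decide⟩ = 0; linear_combination -e5
  · show g ⟨(2,5), by decide⟩ = 0; linear_combination e3
  · show g ⟨(3,4), by decide⟩ = 0; linear_combination -e14 + e4 + e1
  · show g ⟨(3,5), by decide⟩ = 0; linear_combination -e1
  · show g ⟨(4,5), by decide⟩ = 0; linear_combination -e15 + e2 + e5
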